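/- Let α > 1 and define φ_α(t) = (α^t − 1)(α + 1)/((α^t + 1)(α − 1)). Then φ_α(1) = 1 and φ_α(t) ≤ t for every real t ≥ 1; in particular 0 < φ_α(k) ≤ k for every positive integer k. -/

import Mathlib

open Real

noncomputable section

/-- The disparity function `φ_α(t) = (α^t − 1)(α + 1)/((α^t + 1)(α − 1))`. -/
def phiDecay (α t : ℝ) : ℝ := (α ^ t - 1) * (α + 1) / ((α ^ t + 1) * (α - 1))

lemma aux_log (x : ℝ) (hx : 1 ≤ x) : 2 * x * Real.log x ≤ x ^ 2 - 1 := by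
  have hD : ∀ y : ℝ, 0 < y → HasDerivAt (fun z : ℝ => z ^ 2 - 1 - 2 * z * Real.log z)
      (2 * y - (2 * Real.log y + 2 * y * y⁻¹)) y := by
    intro y hy
    have h1 : HasDerivAt (fun z : ℝ => z ^ 2) (2 * y) y := by
      simpa using hasDerivAt_pow 2 y
    have h3 : HasDerivAt (fun z : ℝ => 2 * z) 2 y := by
      simpa using (hasDerivAt_id y).const_mul (2 : ℝ)
    have h2 : HasDerivAt Real.log y⁻¹ y := Real.hasDerivAt_log hy.ne'
    exact (h1.sub_const 1).sub (h3.mul h2)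
  have hmono : MonotoneOn (fun z : ℝ => z ^ 2 - 1 - 2 * z * Real.log z) (Set.Ici 1) := by
    apply monotoneOn_of_deriv_nonneg (convex_Ici 1)
    · intro y hy
      have : (0:ℝ) < y := lt_of_lt_of_le one_pos (by exact hy)
      exact (hD y this).continuousAt.continuousWithinAt
    · intro y hy
      rw [interior_Ici] at hy
      exact ((hD y (lt_trans one_pos hy)).differentiableAt).differentiableWithinAt
    · intro y hy
      rw [interior_Ici] at hy
      have hy0 : (0:ℝ) < y := lt_trans one_pos hy
      rw [(hD y hy0).deriv]
      have hlog : Real.log y ≤ y - 1 := Real.log_le_sub_one_of_pos hy0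
      have : y * y⁻¹ = 1 := mul_inv_cancel₀ hy0.ne'
      nlinarith [this]
  have h0 : (fun z : ℝ => z ^ 2 - 1 - 2 * z * Real.log z) 1 ≤
      (fun z : ℝ => z ^ 2 - 1 - 2 * z * Real.log z) x :=
    hmono (Set.self_mem_Ici) hx hx
  simp only [Real.log_one] at h0
  nlinarith [h0]

lemma aux_key (α : ℝ) (hα : 1 < α) (t : ℝ) (ht : 1 ≤ t) :
    (Real.exp (Real.log α * t) - 1) * (α + 1) ≤ t * ((Real.exp (Real.log α * t) + 1) * (α - 1)) := by
  set L := Real.log α with hL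
  have hLpos : 0 < L := Real.log_pos hα
  have hexpL : Real.exp L = α := Real.exp_log (lt_trans one_pos hα)
  set f : ℝ → ℝ := fun s => s * ((α - 1) / (α + 1)) - (Real.exp (L * s) - 1) / (Real.exp (L * s) + 1) with hf
  have hder : ∀ s : ℝ, HasDerivAt f
      ((α - 1) / (α + 1) - (L * Real.exp (L * s) * (Real.exp (L * s) + 1) -
        (Real.exp (L * s) - 1) * (L * Real.exp (L * s))) / (Real.exp (L * s) + 1) ^ 2) s := by
    intro s
    have he : HasDerivAt (fun u : ℝ => Real.exp (L * u)) (L * Real.exp (L * s)) s := by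
      have h1 : HasDerivAt (fun u : ℝ => L * u) L s := by
        simpa using (hasDerivAt_id s).const_mul L
      simpa [mul_comm] using h1.exp
    have hden : Real.exp (L * s) + 1 ≠ 0 := by positivity
    have h2 : HasDerivAt (fun u : ℝ => u * ((α - 1) / (α + 1))) ((α - 1) / (α + 1)) s := by
      simpa using (hasDerivAt_id s).mul_const ((α - 1) / (α + 1))
    exact h2.sub (((he.sub_const 1).div (he.add_const 1) hden))
  have hmono : MonotoneOn f (Set.Ici 1) := by
    apply monotoneOn_of_deriv_nonneg (convex_Ici 1)
    · intro s _; exact (hder s).continuousAt.continuousWithinAt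
    · intro s _; exact (hder s).differentiableAt.differentiableWithinAt
    · intro s hs
      rw [interior_Ici] at hs
      rw [(hder s).deriv]
      set x := Real.exp (L * s) with hx
      have hxα : α ≤ x := by
        rw [hx, ← hexpL]
        exact Real.exp_le_exp.2 (by nlinarith [(Set.mem_Ioi.mp hs).le])
      have hx1 : (1:ℝ) < x := lt_of_lt_of_le hα hxα
      have hlog : 2 * α * L ≤ α ^ 2 - 1 := by
        simpa [hL] using aux_log α (le_of_lt hα)
      have hsimp : (L * x * (x + 1) - (x - 1) * (L * x)) / (x + 1) ^ 2 = 2 * L * x / (x + 1) ^ 2 := by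
        ring_nf
      rw [hsimp]
      rw [sub_nonneg, div_le_div_iff₀ (by positivity) (by positivity)]
      have a1 : (α - 1) * ((x - α) * (α * x - 1)) ≥ 0 := by
        apply mul_nonneg (by linarith)
        apply mul_nonneg (by linarith) (by nlinarith)
      have a2 : x * (α + 1) * (α ^ 2 - 1 - 2 * α * L) ≥ 0 := by
        apply mul_nonneg (by positivity) (by linarith)
      nlinarith [a1, a2, lt_trans one_pos hα]
  have h1 : f 1 = 0 := by
    simp only [hf, mul_one, one_mul]
    rw [hexpL]
    ring
  have hft : 0 ≤ f t := by
    have := hmono Set.self_mem_Ici ht ht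
    rw [h1] at this; exact this
  have hden : (0:ℝ) < Real.exp (L * t) + 1 := by positivity
  have hαden : (0:ℝ) < α + 1 := by linarith
  rw [hf] at hft
  simp only [sub_nonneg] at hft
  rw [div_le_iff₀ hden] at hft
  have h2 := mul_le_mul_of_nonneg_right hft (le_of_lt hαden)
  have h3 : t * ((α - 1) / (α + 1)) * (Real.exp (L * t) + 1) * (α + 1)
      = t * ((Real.exp (L * t) + 1) * (α - 1)) := by
    field_simp
  linarith [h2, h3]

lemma phi_le (α : ℝ) (hα : 1 < α) (t : ℝ) (ht : 1 ≤ t) : phiDecay α t ≤ t := by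
  have hα0 : (0:ℝ) < α := lt_trans one_pos hα
  have hxe : α ^ t = Real.exp (Real.log α * t) := Real.rpow_def_of_pos hα0 t
  have hx1 : (1:ℝ) < α ^ t := by
    rw [Real.one_lt_rpow_iff_of_pos hα0]
    exact Or.inl ⟨hα, lt_of_lt_of_le one_pos ht⟩
  have hden : (0:ℝ) < (α ^ t + 1) * (α - 1) := by
    apply mul_pos (by linarith) (by linarith)
  rw [phiDecay, div_le_iff₀ hden, hxe]
  have := aux_key α hα t ht
  linarith

theorem phiDecay_le (α : ℝ) (hα : 1 < α) :
    phiDecay α 1 = 1 ∧ (∀ t : ℝ, 1 ≤ t → phiDecay α t ≤ t) ∧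
      ∀ k : ℕ, 0 < k → 0 < phiDecay α k ∧ phiDecay α k ≤ k := by
  have hα0 : (0:ℝ) < α := lt_trans one_pos hα
  refine ⟨?_, fun t ht => phi_le α hα t ht, fun k hk => ?_⟩
  · rw [phiDecay, Real.rpow_one, div_eq_one_iff_eq (by nlinarith)]
    ring
  · have hk1 : (1:ℝ) ≤ (k:ℝ) := by exact_mod_cast hk
    have hx1 : (1:ℝ) < α ^ (k:ℝ) := by
      rw [Real.one_lt_rpow_iff_of_pos hα0]
      exact Or.inl ⟨hα, lt_of_lt_of_le one_pos hk1⟩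
    constructor
    · rw [phiDecay]
      apply div_pos (mul_pos (by linarith) (by linarith))
        (mul_pos (by linarith) (by linarith))
    · exact phi_le α hα (k:ℝ) hk1

end
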